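/- Fix η > 0 and an integer M ≥ 1, and for ε > 0 set ε₁ = ε/η and P_o(ε) = (1 − e^{−ε})^M + Σ_{n=1}^{M} [ n · ∫₀^∞ e^{−y} · (1 − e^{−y})^{n−1} · (1 − e^{−ε₁/y})^M dy ] · C(M,n) · (1 − e^{−ε})^{M−n} · e^{−nε}. Then lim_{ε→0⁺} log P_o(ε) / log ε = M; that is, when a single user pair is scheduled (m = 1), the greedy user scheduling approach achieves the full diversity gain M. -/

import Mathlib

open Filter Topology

open Filter Topology Real MeasureTheory Set

-- basic exponential inequalities
lemma one_sub_exp_neg_le (x : ℝ) : 1 - Real.exp (-x) ≤ x := by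
  nlinarith [Real.add_one_le_exp (-x)]

lemma one_sub_exp_neg_nonneg {x : ℝ} (hx : 0 ≤ x) : 0 ≤ 1 - Real.exp (-x) := by
  have : Real.exp (-x) ≤ 1 := Real.exp_le_one_iff.2 (by linarith)
  linarith

lemma one_sub_exp_neg_le_one {x : ℝ} : 1 - Real.exp (-x) ≤ 1 := by
  have := Real.exp_pos (-x); linarith

-- the key integral bound
lemma aux_int_bound (M n : ℕ) (hn : 1 ≤ n) (hnM : n ≤ M) (c : ℝ) (hc0 : 0 < c) (hc1 : c ≤ 1) :
    (∫ y in Set.Ioi (0:ℝ),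
        Real.exp (-y) * (1 - Real.exp (-y)) ^ (n - 1) * (1 - Real.exp (-(c / y))) ^ M)
      ≤ c ^ n * (2 - Real.log c) := by
  set f : ℝ → ℝ := fun y =>
    Real.exp (-y) * (1 - Real.exp (-y)) ^ (n - 1) * (1 - Real.exp (-(c / y))) ^ M with hf
  set g : ℝ → ℝ := fun y =>
    if y ≤ c then c ^ (n - 1) else if y ≤ 1 then c ^ n * y⁻¹ else c ^ n * Real.exp (-y)
    with hgdef
  -- pointwise bounds on Ioi 0
  have hfg : ∀ y ∈ Set.Ioi (0:ℝ), f y ≤ g y := by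
    intro y hy
    simp only [Set.mem_Ioi] at hy
    have h1y : 0 ≤ 1 - Real.exp (-y) := one_sub_exp_neg_nonneg hy.le
    have hcy : 0 ≤ c / y := le_of_lt (div_pos hc0 hy)
    have h1cy : 0 ≤ 1 - Real.exp (-(c / y)) := one_sub_exp_neg_nonneg hcy
    by_cases hyc : y ≤ c
    · have hA : Real.exp (-y) ≤ 1 := Real.exp_le_one_iff.2 (by linarith)
      have hB : (1 - Real.exp (-y)) ^ (n - 1) ≤ c ^ (n - 1) :=
        pow_le_pow_left₀ h1y (le_trans (one_sub_exp_neg_le y) hyc) _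
      have hC : (1 - Real.exp (-(c / y))) ^ M ≤ 1 := pow_le_one₀ h1cy one_sub_exp_neg_le_one
      have : f y ≤ 1 * c ^ (n - 1) * 1 := by
        apply mul_le_mul _ hC (pow_nonneg h1cy _) (by positivity)
        exact mul_le_mul hA hB (pow_nonneg h1y _) zero_le_one
      simpa [hgdef, hyc] using this
    · push_neg at hyc
      have hcylt : c / y ≤ 1 := (div_le_one hy).2 hyc.le
      have hkey : f y ≤ c ^ n * Real.exp (-y) / y := by
        have hB : (1 - Real.exp (-y)) ^ (n - 1) ≤ y ^ (n - 1) :=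
          pow_le_pow_left₀ h1y (one_sub_exp_neg_le y) _
        have hC : (1 - Real.exp (-(c / y))) ^ M ≤ (c / y) ^ n := by
          calc (1 - Real.exp (-(c / y))) ^ M ≤ (c / y) ^ M :=
                pow_le_pow_left₀ h1cy (one_sub_exp_neg_le _) _
            _ ≤ (c / y) ^ n := pow_le_pow_of_le_one hcy hcylt hnM
        have : f y ≤ Real.exp (-y) * y ^ (n - 1) * (c / y) ^ n := by
          apply mul_le_mul _ hC (pow_nonneg h1cy _) (by positivity)
          exact mul_le_mul le_rfl hB (pow_nonneg h1y _) (Real.exp_pos _).le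
        refine this.trans (le_of_eq ?_)
        have hyne : y ≠ 0 := ne_of_gt hy
        obtain ⟨m, rfl⟩ : ∃ m, n = m + 1 := ⟨n - 1, by omega⟩
        simp only [Nat.add_sub_cancel, div_pow, pow_succ]
        field_simp
      by_cases hy1 : y ≤ 1
      · have : c ^ n * Real.exp (-y) / y ≤ c ^ n * y⁻¹ := by
          rw [div_le_iff₀ hy]
          have hA : Real.exp (-y) ≤ 1 := Real.exp_le_one_iff.2 (by linarith)
          calc c ^ n * Real.exp (-y) ≤ c ^ n * 1 := by
                exact mul_le_mul_of_nonneg_left hA (by positivity)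
            _ = c ^ n := mul_one _
            _ = c ^ n * y⁻¹ * y := by field_simp
        simp only [hgdef, if_neg (not_le.2 hyc), if_pos hy1]
        exact hkey.trans this
      · push_neg at hy1
        have : c ^ n * Real.exp (-y) / y ≤ c ^ n * Real.exp (-y) :=
          div_le_self (by positivity) hy1.le
        simp only [hgdef, if_neg (not_le.2 hyc), if_neg (not_le.2 hy1)]
        exact hkey.trans this
  -- integrability of g on the three pieces
  have e1 : Set.EqOn g (fun _ => c ^ (n - 1)) (Set.Ioc 0 c) := fun y hy => by
    simp [hgdef, hy.2]
  have e2 : Set.EqOn g (fun y => c ^ n * y⁻¹) (Set.Ioc c 1) := fun y hy => by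
    simp [hgdef, not_le.2 hy.1, hy.2]
  have e3 : Set.EqOn g (fun y => c ^ n * Real.exp (-y)) (Set.Ioi 1) := fun y hy => by
    have h1 : ¬ y ≤ c := not_le.2 (lt_of_le_of_lt hc1 hy)
    have h2 : ¬ y ≤ 1 := not_le.2 hy
    simp [hgdef, h1, h2]
  have i1 : IntegrableOn g (Set.Ioc 0 c) := by
    exact (integrableOn_const measure_Ioc_lt_top.ne).congr_fun e1.symm measurableSet_Ioc
  have i2 : IntegrableOn g (Set.Ioc c 1) := by
    have : IntegrableOn (fun y : ℝ => c ^ n * y⁻¹) (Set.Icc c 1) := by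
      apply ContinuousOn.integrableOn_Icc
      exact continuousOn_const.mul (continuousOn_id.inv₀ fun x hx => ne_of_gt (lt_of_lt_of_le hc0 hx.1))
    exact (this.mono_set Set.Ioc_subset_Icc_self).congr_fun e2.symm measurableSet_Ioc
  have i3 : IntegrableOn g (Set.Ioi 1) := by
    have : IntegrableOn (fun y : ℝ => Real.exp (-y)) (Set.Ioi 1) := by
      simpa using exp_neg_integrableOn_Ioi 1 one_pos
    have h3' : IntegrableOn (fun y : ℝ => c ^ n * Real.exp (-y)) (Set.Ioi 1) :=
      this.const_mul _
    exact h3'.congr_fun e3.symm measurableSet_Ioi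
  have i23 : IntegrableOn g (Set.Ioi c) := by
    rw [← Set.Ioc_union_Ioi_eq_Ioi hc1]
    exact i2.union i3
  have ig : IntegrableOn g (Set.Ioi 0) := by
    rw [← Set.Ioc_union_Ioi_eq_Ioi hc0.le]
    exact i1.union i23
  -- ∫ f ≤ ∫ g
  have hmono : (∫ y in Set.Ioi (0:ℝ), f y) ≤ ∫ y in Set.Ioi (0:ℝ), g y := by
    apply integral_mono_of_nonneg
    · refine (ae_restrict_iff' measurableSet_Ioi).2 (ae_of_all _ fun y hy => ?_)
      simp only [Set.mem_Ioi] at hy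
      have h1y : 0 ≤ 1 - Real.exp (-y) := one_sub_exp_neg_nonneg hy.le
      have h1cy : 0 ≤ 1 - Real.exp (-(c / y)) :=
        one_sub_exp_neg_nonneg (le_of_lt (div_pos hc0 hy))
      have := Real.exp_pos (-y)
      positivity
    · exact ig
    · exact (ae_restrict_iff' measurableSet_Ioi).2 (ae_of_all _ hfg)
  -- compute ∫ g
  have hsplit1 : (∫ y in Set.Ioi (0:ℝ), g y)
      = (∫ y in Set.Ioc (0:ℝ) c, g y) + ∫ y in Set.Ioi c, g y := by
    rw [← Set.Ioc_union_Ioi_eq_Ioi hc0.le, setIntegral_union (Set.Ioc_disjoint_Ioi le_rfl)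
      measurableSet_Ioi i1 i23]
  have hsplit2 : (∫ y in Set.Ioi c, g y)
      = (∫ y in Set.Ioc c 1, g y) + ∫ y in Set.Ioi 1, g y := by
    rw [← Set.Ioc_union_Ioi_eq_Ioi hc1, setIntegral_union (Set.Ioc_disjoint_Ioi le_rfl)
      measurableSet_Ioi i2 i3]
  have v1 : (∫ y in Set.Ioc (0:ℝ) c, g y) = c ^ n := by
    rw [setIntegral_congr_fun measurableSet_Ioc e1, setIntegral_const]
    rw [measureReal_def, Real.volume_Ioc, sub_zero, ENNReal.toReal_ofReal hc0.le, smul_eq_mul,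
      ← pow_succ']
    congr 1; omega
  have v2 : (∫ y in Set.Ioc c 1, g y) = c ^ n * (- Real.log c) := by
    rw [setIntegral_congr_fun measurableSet_Ioc e2, MeasureTheory.integral_const_mul]
    congr 1
    rw [← intervalIntegral.integral_of_le hc1, integral_inv_of_pos hc0 one_pos]
    rw [one_div, Real.log_inv]
  have v3 : (∫ y in Set.Ioi (1:ℝ), g y) = c ^ n * Real.exp (-1) := by
    rw [setIntegral_congr_fun measurableSet_Ioi e3, MeasureTheory.integral_const_mul,
      integral_exp_neg_Ioi]
  have hexp1 : Real.exp (-1 : ℝ) ≤ 1 := Real.exp_le_one_iff.2 (by norm_num)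
  have hcn : (0:ℝ) ≤ c ^ n := by positivity
  calc (∫ y in Set.Ioi (0:ℝ), f y) ≤ ∫ y in Set.Ioi (0:ℝ), g y := hmono
    _ = c ^ n + (c ^ n * (- Real.log c) + c ^ n * Real.exp (-1)) := by
        rw [hsplit1, hsplit2, v1, v2, v3]
    _ ≤ c ^ n * (2 - Real.log c) := by nlinarith

-- log(a - t)/t → 0 as t → -∞
lemma aux_loglog (a : ℝ) : Tendsto (fun t : ℝ => Real.log (a - t) / t) atBot (𝓝 0) := by
  have h1 : Tendsto (fun u : ℝ => Real.log (a + u) / (a + u)) atTop (𝓝 0) :=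
    Real.isLittleO_log_id_atTop.tendsto_div_nhds_zero.comp
      (tendsto_atTop_add_const_left _ a tendsto_id)
  have h2 : Tendsto (fun u : ℝ => (a + u) / u) atTop (𝓝 1) := by
    have ha : Tendsto (fun u : ℝ => a / u) atTop (𝓝 0) :=
      tendsto_const_nhds.div_atTop tendsto_id
    have := ha.add tendsto_const_nhds (b := (1:ℝ))
    rw [zero_add] at this
    refine this.congr' ?_
    filter_upwards [eventually_ne_atTop (0:ℝ)] with u hu
    field_simp
  have h3 : Tendsto (fun u : ℝ => Real.log (a + u) / u) atTop (𝓝 0) := by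
    have := h1.mul h2
    rw [zero_mul] at this
    refine this.congr' ?_
    filter_upwards [eventually_gt_atTop (max 0 (-a))] with u hu
    have hu0 : u ≠ 0 := ne_of_gt (lt_of_le_of_lt (le_max_left _ _) hu)
    have hau : a + u ≠ 0 := by
      have : -a < u := lt_of_le_of_lt (le_max_right _ _) hu
      intro h; apply absurd h; intro h'; linarith
    field_simp
  have h4 : Tendsto (fun t : ℝ => Real.log (a + (-t)) / (-t)) atBot (𝓝 0) :=
    h3.comp tendsto_neg_atBot_atTop
  have := h4.neg
  rw [neg_zero] at this
  refine this.congr fun t => ?_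
  rw [div_neg, neg_neg, sub_eq_add_neg]

noncomputable def Pfun (η : ℝ) (M : ℕ) (ε : ℝ) : ℝ :=
  (1 - Real.exp (-ε)) ^ M +
    ∑ n ∈ Finset.Icc 1 M,
      ((n : ℝ) *
          ∫ y in Set.Ioi (0 : ℝ),
            Real.exp (-y) * (1 - Real.exp (-y)) ^ (n - 1) *
              (1 - Real.exp (-((ε / η) / y))) ^ M) *
        (M.choose n : ℝ) * (1 - Real.exp (-ε)) ^ (M - n) * Real.exp (-(n : ℝ) * ε)

lemma integral_nonneg_aux (η : ℝ) (hη : 0 < η) (M n : ℕ) {ε : ℝ} (hε0 : 0 < ε) :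
    0 ≤ ∫ y in Set.Ioi (0 : ℝ),
        Real.exp (-y) * (1 - Real.exp (-y)) ^ (n - 1) * (1 - Real.exp (-((ε / η) / y))) ^ M := by
  apply setIntegral_nonneg measurableSet_Ioi
  intro y hy
  simp only [Set.mem_Ioi] at hy
  have h1 : 0 ≤ 1 - Real.exp (-y) := one_sub_exp_neg_nonneg hy.le
  have h2 : 0 ≤ 1 - Real.exp (-(ε / η / y)) :=
    one_sub_exp_neg_nonneg (le_of_lt (div_pos (div_pos hε0 hη) hy))
  have := (Real.exp_pos (-y)).le
  positivity

lemma Pfun_lb (η : ℝ) (hη : 0 < η) (M : ℕ) {ε : ℝ} (hε0 : 0 < ε) (hε1 : ε ≤ 1) :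
    (ε / 3) ^ M ≤ Pfun η M ε := by
  have hsum : 0 ≤ ∑ n ∈ Finset.Icc 1 M,
      ((n : ℝ) *
          ∫ y in Set.Ioi (0 : ℝ),
            Real.exp (-y) * (1 - Real.exp (-y)) ^ (n - 1) *
              (1 - Real.exp (-((ε / η) / y))) ^ M) *
        (M.choose n : ℝ) * (1 - Real.exp (-ε)) ^ (M - n) * Real.exp (-(n : ℝ) * ε) := by
    apply Finset.sum_nonneg
    intro n hn
    have hI := integral_nonneg_aux η hη M n hε0
    have h1 : 0 ≤ 1 - Real.exp (-ε) := one_sub_exp_neg_nonneg hε0.le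
    exact mul_nonneg (mul_nonneg (mul_nonneg (mul_nonneg (Nat.cast_nonneg n) hI)
      (Nat.cast_nonneg _)) (pow_nonneg h1 _)) (Real.exp_pos _).le
  have h13 : ε / 3 ≤ 1 - Real.exp (-ε) := by
    have huv : Real.exp ε * Real.exp (-ε) = 1 := by rw [← Real.exp_add]; simp
    have h1 : ε * Real.exp (-ε) ≤ 1 - Real.exp (-ε) := by
      nlinarith [mul_le_mul_of_nonneg_right (Real.add_one_le_exp ε) (Real.exp_pos (-ε)).le]
    have h2 : Real.exp (-1 : ℝ) ≤ Real.exp (-ε) := Real.exp_le_exp.2 (by linarith)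
    have h3 : (3 : ℝ)⁻¹ ≤ Real.exp (-1 : ℝ) := by
      rw [Real.exp_neg]
      exact inv_anti₀ (Real.exp_pos 1)
        (le_of_lt (lt_trans Real.exp_one_lt_d9 (by norm_num)))
    calc ε / 3 = ε * (3 : ℝ)⁻¹ := by ring
      _ ≤ ε * Real.exp (-ε) := mul_le_mul_of_nonneg_left (h3.trans h2) hε0.le
      _ ≤ 1 - Real.exp (-ε) := h1
  calc (ε / 3) ^ M ≤ (1 - Real.exp (-ε)) ^ M := pow_le_pow_left₀ (by positivity) h13 M
    _ ≤ Pfun η M ε := le_add_of_nonneg_right hsum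

lemma Pfun_ub (η : ℝ) (hη : 0 < η) (M : ℕ) {ε : ℝ} (hε0 : 0 < ε) (hε1 : ε ≤ 1)
    (hεη : ε ≤ η) :
    Pfun η M ε ≤ (1 + ∑ n ∈ Finset.Icc 1 M, (n : ℝ) * (M.choose n : ℝ) * η⁻¹ ^ n) * ε ^ M *
      (2 + Real.log η - Real.log ε) := by
  set L : ℝ := 2 + Real.log η - Real.log ε with hL
  have hc0 : 0 < ε / η := div_pos hε0 hη
  have hc1 : ε / η ≤ 1 := (div_le_one hη).2 hεη
  have hLc : Real.log (ε / η) = Real.log ε - Real.log η := Real.log_div hε0.ne' hη.ne'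
  have hL2 : 2 ≤ L := by
    have := Real.log_nonpos hc0.le hc1
    rw [hLc] at this
    simp only [hL]; linarith
  have hA : (1 - Real.exp (-ε)) ^ M ≤ ε ^ M :=
    pow_le_pow_left₀ (one_sub_exp_neg_nonneg hε0.le) (one_sub_exp_neg_le ε) M
  have hterm : ∀ n ∈ Finset.Icc 1 M,
      ((n : ℝ) *
          ∫ y in Set.Ioi (0 : ℝ),
            Real.exp (-y) * (1 - Real.exp (-y)) ^ (n - 1) *
              (1 - Real.exp (-((ε / η) / y))) ^ M) *
        (M.choose n : ℝ) * (1 - Real.exp (-ε)) ^ (M - n) * Real.exp (-(n : ℝ) * ε)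
        ≤ (n : ℝ) * (M.choose n : ℝ) * η⁻¹ ^ n * (ε ^ M * L) := by
    intro n hn
    obtain ⟨hn1, hnM⟩ := Finset.mem_Icc.1 hn
    have hI := aux_int_bound M n hn1 hnM (ε / η) hc0 hc1
    rw [hLc] at hI
    have hI' : (∫ y in Set.Ioi (0 : ℝ),
        Real.exp (-y) * (1 - Real.exp (-y)) ^ (n - 1) * (1 - Real.exp (-((ε / η) / y))) ^ M)
        ≤ (ε / η) ^ n * L := by
      refine hI.trans (le_of_eq ?_); simp only [hL]; ring
    have hInn := integral_nonneg_aux η hη M n hε0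
    have hpowB : (1 - Real.exp (-ε)) ^ (M - n) ≤ ε ^ (M - n) :=
      pow_le_pow_left₀ (one_sub_exp_neg_nonneg hε0.le) (one_sub_exp_neg_le ε) _
    have hexpB : Real.exp (-(n : ℝ) * ε) ≤ 1 := by
      apply Real.exp_le_one_iff.2
      have : (0:ℝ) ≤ (n:ℝ) := Nat.cast_nonneg n
      nlinarith
    have h1n : 0 ≤ 1 - Real.exp (-ε) := one_sub_exp_neg_nonneg hε0.le
    have step : ((n : ℝ) *
          ∫ y in Set.Ioi (0 : ℝ),
            Real.exp (-y) * (1 - Real.exp (-y)) ^ (n - 1) *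
              (1 - Real.exp (-((ε / η) / y))) ^ M) *
        (M.choose n : ℝ) * (1 - Real.exp (-ε)) ^ (M - n) * Real.exp (-(n : ℝ) * ε)
        ≤ ((n : ℝ) * ((ε / η) ^ n * L)) * (M.choose n : ℝ) * ε ^ (M - n) * 1 := by
      have hL0 : 0 ≤ L := by linarith
      apply mul_le_mul _ hexpB (Real.exp_pos _).le (by positivity)
      apply mul_le_mul _ hpowB (pow_nonneg h1n _) (by positivity)
      apply mul_le_mul_of_nonneg_right _ (Nat.cast_nonneg _)
      exact mul_le_mul_of_nonneg_left hI' (Nat.cast_nonneg _)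
    refine step.trans (le_of_eq ?_)
    have hpowc : ε ^ n * ε ^ (M - n) = ε ^ M := by rw [← pow_add]; congr 1; omega
    have h1 : (ε / η) ^ n * ε ^ (M - n) = ε ^ M * η⁻¹ ^ n := by
      rw [div_eq_mul_inv, mul_pow, mul_right_comm, hpowc]
    linear_combination ((n : ℝ) * (M.choose n : ℝ) * L) * h1
  calc Pfun η M ε ≤ ε ^ M + ∑ n ∈ Finset.Icc 1 M,
        (n : ℝ) * (M.choose n : ℝ) * η⁻¹ ^ n * (ε ^ M * L) :=
      add_le_add hA (Finset.sum_le_sum hterm)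
    _ = ε ^ M + (∑ n ∈ Finset.Icc 1 M, (n : ℝ) * (M.choose n : ℝ) * η⁻¹ ^ n) * (ε ^ M * L) := by
      rw [Finset.sum_mul]
    _ ≤ (1 + ∑ n ∈ Finset.Icc 1 M, (n : ℝ) * (M.choose n : ℝ) * η⁻¹ ^ n) * ε ^ M * L := by
      have hS : 0 ≤ ∑ n ∈ Finset.Icc 1 M, (n : ℝ) * (M.choose n : ℝ) * η⁻¹ ^ n :=
        Finset.sum_nonneg fun n _ => by positivity
      have hε : (0:ℝ) ≤ ε ^ M := by positivity
      nlinarith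

/-- Fix `η > 0` and `M ≥ 1`. With `ε₁ = ε/η` and
`P_o(ε) = (1 − e^{−ε})^M + Σ_{n=1}^{M} [ n ∫₀^∞ e^{−y} (1 − e^{−y})^{n−1} (1 − e^{−ε₁/y})^M dy ]
  · C(M,n) (1 − e^{−ε})^{M−n} e^{−nε}`,
we have `lim_{ε→0⁺} log P_o(ε)/log ε = M`: when a single user pair is scheduled, the greedy
user scheduling approach achieves the full diversity gain `M`. -/
theorem stmt17 (η : ℝ) (hη : 0 < η) (M : ℕ) (hM : 1 ≤ M) :
    Tendsto
      (fun ε : ℝ =>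
        Real.log
            ((1 - Real.exp (-ε)) ^ M +
              ∑ n ∈ Finset.Icc 1 M,
                ((n : ℝ) *
                    ∫ y in Set.Ioi (0 : ℝ),
                      Real.exp (-y) * (1 - Real.exp (-y)) ^ (n - 1) *
                        (1 - Real.exp (-((ε / η) / y))) ^ M) *
                  (M.choose n : ℝ) * (1 - Real.exp (-ε)) ^ (M - n) * Real.exp (-(n : ℝ) * ε))
          / Real.log ε)
      (𝓝[>] 0) (𝓝 M) := by
  have hgoal : (fun ε : ℝ =>
      Real.log
          ((1 - Real.exp (-ε)) ^ M +
            ∑ n ∈ Finset.Icc 1 M,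
              ((n : ℝ) *
                  ∫ y in Set.Ioi (0 : ℝ),
                    Real.exp (-y) * (1 - Real.exp (-y)) ^ (n - 1) *
                      (1 - Real.exp (-((ε / η) / y))) ^ M) *
                (M.choose n : ℝ) * (1 - Real.exp (-ε)) ^ (M - n) * Real.exp (-(n : ℝ) * ε))
        / Real.log ε) = fun ε : ℝ => Real.log (Pfun η M ε) / Real.log ε := rfl
  rw [hgoal]
  set K : ℝ := 1 + ∑ n ∈ Finset.Icc 1 M, (n : ℝ) * (M.choose n : ℝ) * η⁻¹ ^ n with hK
  have hK1 : (1 : ℝ) ≤ K := by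
    have hS : 0 ≤ ∑ n ∈ Finset.Icc 1 M, (n : ℝ) * (M.choose n : ℝ) * η⁻¹ ^ n :=
      Finset.sum_nonneg fun n _ => by positivity
    simp only [hK]; linarith
  have hK0 : (0 : ℝ) < K := lt_of_lt_of_le one_pos hK1
  have hlog := Real.tendsto_log_nhdsGT_zero
  have hinv : Tendsto (fun ε : ℝ => (Real.log ε)⁻¹) (𝓝[>] (0 : ℝ)) (𝓝 0) := by
    have h := (tendsto_neg_atBot_atTop.comp hlog).inv_tendsto_atTop
    have h2 := h.neg
    rw [neg_zero] at h2
    refine h2.congr fun ε => ?_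
    simp only [Pi.inv_apply, Function.comp_apply, inv_neg, neg_neg]
  have hll : Tendsto (fun ε : ℝ => Real.log (2 + Real.log η - Real.log ε) / Real.log ε)
      (𝓝[>] (0 : ℝ)) (𝓝 0) := by
    exact (aux_loglog (2 + Real.log η)).comp hlog
  -- limit of the lower bounding function
  have hlowlim : Tendsto (fun ε : ℝ =>
      (Real.log K + M * Real.log ε + Real.log (2 + Real.log η - Real.log ε)) / Real.log ε)
      (𝓝[>] (0 : ℝ)) (𝓝 M) := by
    have hmain : Tendsto (fun ε : ℝ =>
        (M : ℝ) + (Real.log K * (Real.log ε)⁻¹ +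
          Real.log (2 + Real.log η - Real.log ε) / Real.log ε))
        (𝓝[>] (0 : ℝ)) (𝓝 ((M : ℝ) + (Real.log K * 0 + 0))) :=
      tendsto_const_nhds.add ((tendsto_const_nhds.mul hinv).add hll)
    rw [mul_zero, add_zero, add_zero] at hmain
    refine hmain.congr' ?_
    filter_upwards [Ioo_mem_nhdsGT (one_pos (α := ℝ))] with ε hε
    have hl : Real.log ε ≠ 0 := ne_of_lt (Real.log_neg hε.1 hε.2)
    field_simp
    ring
  -- limit of the upper bounding function
  have huplim : Tendsto (fun ε : ℝ => M * (Real.log ε - Real.log 3) / Real.log ε)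
      (𝓝[>] (0 : ℝ)) (𝓝 M) := by
    have hmain : Tendsto (fun ε : ℝ => (M : ℝ) - M * Real.log 3 * (Real.log ε)⁻¹)
        (𝓝[>] (0 : ℝ)) (𝓝 ((M : ℝ) - M * Real.log 3 * 0)) :=
      tendsto_const_nhds.sub (tendsto_const_nhds.mul hinv)
    rw [mul_zero, sub_zero] at hmain
    refine hmain.congr' ?_
    filter_upwards [Ioo_mem_nhdsGT (one_pos (α := ℝ))] with ε hε
    have hl : Real.log ε ≠ 0 := ne_of_lt (Real.log_neg hε.1 hε.2)
    field_simp
  refine tendsto_of_tendsto_of_tendsto_of_le_of_le' hlowlim huplim ?_ ?_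
  · -- lower bound on the ratio
    filter_upwards [Ioo_mem_nhdsGT (lt_min one_pos hη)] with ε hε
    have hε0 : 0 < ε := hε.1
    have hε1 : ε < 1 := lt_of_lt_of_le hε.2 (min_le_left _ _)
    have hεη : ε ≤ η := le_of_lt (lt_of_lt_of_le hε.2 (min_le_right _ _))
    have hlogneg : Real.log ε < 0 := Real.log_neg hε0 hε1
    have hub := Pfun_ub η hη M hε0 hε1.le hεη
    have hlb := Pfun_lb η hη M hε0 hε1.le
    have hP0 : 0 < Pfun η M ε := lt_of_lt_of_le (by positivity) hlb
    set L : ℝ := 2 + Real.log η - Real.log ε with hLd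
    have hL2 : (2 : ℝ) ≤ L := by
      have h1 : Real.log ε ≤ Real.log η := (Real.log_le_log_iff hε0 hη).2 hεη
      simp only [hLd]; linarith
    have hL0 : (0 : ℝ) < L := lt_of_lt_of_le two_pos hL2
    have hlogP : Real.log (Pfun η M ε)
        ≤ Real.log K + M * Real.log ε + Real.log L := by
      have hx : Pfun η M ε ≤ K * ε ^ M * L := hub
      have h1 : Real.log (Pfun η M ε) ≤ Real.log (K * ε ^ M * L) :=
        (Real.log_le_log_iff hP0 (by positivity)).2 hx
      rwa [Real.log_mul (by positivity) hL0.ne', Real.log_mul hK0.ne' (by positivity),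
        Real.log_pow] at h1
    exact div_le_div_of_nonpos_of_le hlogneg.le hlogP
  · -- upper bound on the ratio
    filter_upwards [Ioo_mem_nhdsGT (lt_min one_pos hη)] with ε hε
    have hε0 : 0 < ε := hε.1
    have hε1 : ε < 1 := lt_of_lt_of_le hε.2 (min_le_left _ _)
    have hlogneg : Real.log ε < 0 := Real.log_neg hε0 hε1
    have hlb := Pfun_lb η hη M hε0 hε1.le
    have hlogP : M * (Real.log ε - Real.log 3) ≤ Real.log (Pfun η M ε) := by
      have hP0 : 0 < Pfun η M ε := lt_of_lt_of_le (by positivity) hlb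
      have h1 : Real.log ((ε / 3) ^ M) ≤ Real.log (Pfun η M ε) :=
        (Real.log_le_log_iff (by positivity) hP0).2 hlb
      rwa [Real.log_pow, Real.log_div hε0.ne' (by norm_num)] at h1
    exact div_le_div_of_nonpos_of_le hlogneg.le hlogP
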